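/- For N ≥ 3, the assignment kᵢ ↦ vᵢwᵢᵀ induces an injective ring homomorphism ℂ[k₁,…,k_N]/I_N → ℂ[v₁,w₁,…,v_N,w_N]/I'_N, where I_N = (k₁+…+k_N, Q₁,…,Q_N) and I'_N = (v₁w₁ᵀ + … + v_Nw_Nᵀ), given that I_N is radical. -/

import Mathlib

open MvPolynomial

namespace Stmt15

/-- `ℂ[k₁,…,k_N]`: `X (i, r, c)` is the `(r,c)` entry of `kᵢ`. -/
abbrev A (N : ℕ) := MvPolynomial (Fin N × Fin 2 × Fin 2) ℂ

/-- `ℂ[v₁,w₁,…,v_N,w_N]`: `X (i, false, c)` is `vᵢ c`, `X (i, true, c)` is `wᵢ c`. -/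
abbrev B (N : ℕ) := MvPolynomial (Fin N × Bool × Fin 2) ℂ

/-- `I_N = (k₁ + … + k_N, Q₁, …, Q_N)`. -/
noncomputable def IN (N : ℕ) : Ideal (A N) :=
  Ideal.span
    ((Set.range fun rc : Fin 2 × Fin 2 => ∑ i : Fin N, X (i, rc.1, rc.2)) ∪
     (Set.range fun i : Fin N =>
        X (i, 0, 0) * X (i, 1, 1) - X (i, 0, 1) * X (i, 1, 0)))

/-- `I'_N = (v₁w₁ᵀ + … + v_N w_Nᵀ)`, generated by the four matrix entries. -/
noncomputable def IN' (N : ℕ) : Ideal (B N) :=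
  Ideal.span (Set.range fun rc : Fin 2 × Fin 2 =>
    ∑ i : Fin N, X (i, false, rc.1) * X (i, true, rc.2))

/-- The substitution `kᵢ ↦ vᵢ wᵢᵀ`, entrywise `(kᵢ)_{rc} ↦ (vᵢ)_r (wᵢ)_c`. -/
noncomputable def subst (N : ℕ) : A N →ₐ[ℂ] B N :=
  aeval fun v : Fin N × Fin 2 × Fin 2 => X (v.1, false, v.2.1) * X (v.1, true, v.2.2)

lemma factor (k : Fin 2 → Fin 2 → ℂ) (h : k 0 0 * k 1 1 - k 0 1 * k 1 0 = 0) :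
    ∃ v w : Fin 2 → ℂ, ∀ r c, k r c = v r * w c := by
  by_cases h00 : k 0 0 ≠ 0
  · exact ⟨fun r => k r 0, fun c => k 0 c / k 0 0, by
      intro r c; fin_cases r <;> fin_cases c <;> simp only [Fin.zero_eta, Fin.mk_one] <;> field_simp <;> linear_combination h⟩
  by_cases h01 : k 0 1 ≠ 0
  · exact ⟨fun r => k r 1, fun c => k 0 c / k 0 1, by
      intro r c; fin_cases r <;> fin_cases c <;> simp only [Fin.zero_eta, Fin.mk_one] <;> field_simp <;> linear_combination -h⟩
  by_cases h10 : k 1 0 ≠ 0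
  · exact ⟨fun r => k r 0, fun c => k 1 c / k 1 0, by
      intro r c; fin_cases r <;> fin_cases c <;> simp only [Fin.zero_eta, Fin.mk_one] <;> field_simp <;> linear_combination -h⟩
  by_cases h11 : k 1 1 ≠ 0
  · exact ⟨fun r => k r 1, fun c => k 1 c / k 1 1, by
      intro r c; fin_cases r <;> fin_cases c <;> simp only [Fin.zero_eta, Fin.mk_one] <;> field_simp <;> linear_combination h⟩
  · push_neg at h00 h01 h10 h11
    exact ⟨0, 0, by intro r c; fin_cases r <;> fin_cases c <;> simp [h00, h01, h10, h11]⟩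

lemma subst_mem (N : ℕ) {p : A N} (hp : p ∈ IN N) : subst N p ∈ IN' N := by
  refine Submodule.span_induction ?_ ?_ ?_ ?_ hp
  · rintro g (⟨rc, rfl⟩ | ⟨i, rfl⟩)
    · apply Ideal.subset_span
      exact ⟨rc, by simp [subst]⟩
    · have : subst N (X (i, 0, 0) * X (i, 1, 1) - X (i, 0, 1) * X (i, 1, 0)) = 0 := by
        simp [subst]; ring
      rw [this]; exact (IN' N).zero_mem
  · simp
  · intro a b _ _ ha hb; rw [map_add]; exact (IN' N).add_mem ha hb
  · intro a b _ hb; rw [smul_eq_mul, map_mul]; exact (IN' N).mul_mem_left _ hb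

/-- Key: the preimage of `I'_N` is contained in `I_N`, by the Nullstellensatz. -/
lemma key (N : ℕ) (hrad : (IN N).IsRadical) {p : A N} (hp : subst N p ∈ IN' N) :
    p ∈ IN N := by
  have h1 : p ∈ vanishingIdeal ℂ (zeroLocus ℂ (IN N)) := by
    rw [mem_vanishingIdeal_iff]
    intro x hx
    change eval x p = 0
    have hdet : ∀ i : Fin N,
        x (i,0,0) * x (i,1,1) - x (i,0,1) * x (i,1,0) = 0 := fun i => by
      simpa using hx _ (Ideal.subset_span (Or.inr ⟨i, rfl⟩))
    choose v w hvw using fun i => factor (fun r c => x (i, r, c)) (hdet i)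
    set y : Fin N × Bool × Fin 2 → ℂ :=
      fun t => if t.2.1 then w t.1 t.2.2 else v t.1 t.2.2 with hy
    have hxy : (fun s : Fin N × Fin 2 × Fin 2 =>
        y (s.1, false, s.2.1) * y (s.1, true, s.2.2)) = x := by
      funext s
      obtain ⟨i, r, c⟩ := s
      simpa [hy] using (hvw i r c).symm
    have hcomp : eval y (subst N p) = eval x p := by
      rw [subst, aeval_def, eval₂_comp_left (eval y), ← hxy]
      congr 1
      · ext z; simp
      · funext s; simp
    have hyzero : eval y (subst N p) = 0 := by
      have hle : IN' N ≤ vanishingIdeal ℂ {y} := by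
        rw [IN', Ideal.span_le]
        rintro _ ⟨rc, rfl⟩
        intro z hz
        rw [Set.mem_singleton_iff] at hz; subst hz
        change eval y _ = 0
        have hsum := hx _ (Ideal.subset_span (Or.inl ⟨rc, rfl⟩))
        simp only [map_sum] at hsum ⊢
        calc ∑ i : Fin N, eval y (X (i, false, rc.1) * X (i, true, rc.2))
            = ∑ i : Fin N, x (i, rc.1, rc.2) := by
              refine Finset.sum_congr rfl fun i _ => ?_
              simp [hy]; exact (hvw i rc.1 rc.2).symm
          _ = 0 := by simpa using hsum
      exact hle hp y rfl
    rw [← hcomp, hyzero]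
  rw [vanishingIdeal_zeroLocus_eq_radical] at h1
  exact hrad.radical_le_iff.mpr le_rfl h1

/-- for `N ≥ 3`, given that `I_N` is radical, the assignment
`kᵢ ↦ vᵢwᵢᵀ` induces a well-defined ring homomorphism
`ℂ[k₁,…,k_N]/I_N → ℂ[v₁,w₁,…,v_N,w_N]/I'_N`, and any such induced
homomorphism is injective. -/
theorem stmt_15 (N : ℕ) (hN : 3 ≤ N) (hrad : (IN N).IsRadical) :
    (∃ φ : A N ⧸ IN N →+* B N ⧸ IN' N,
        ∀ p : A N, φ (Ideal.Quotient.mk (IN N) p) = Ideal.Quotient.mk (IN' N) (subst N p)) ∧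
    (∀ φ : A N ⧸ IN N →+* B N ⧸ IN' N,
        (∀ p : A N, φ (Ideal.Quotient.mk (IN N) p) = Ideal.Quotient.mk (IN' N) (subst N p)) →
        Function.Injective φ) := by

  constructor
  · refine ⟨Ideal.Quotient.lift (IN N)
      ((Ideal.Quotient.mk (IN' N)).comp (subst N).toRingHom) ?_, fun p => rfl⟩
    intro a ha
    show Ideal.Quotient.mk (IN' N) (subst N a) = 0
    exact Ideal.Quotient.eq_zero_iff_mem.mpr (subst_mem N ha)
  · intro φ hφ
    intro q1 q2 h12
    obtain ⟨p1, rfl⟩ := Ideal.Quotient.mk_surjective q1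
    obtain ⟨p2, rfl⟩ := Ideal.Quotient.mk_surjective q2
    rw [hφ, hφ, Ideal.Quotient.eq] at h12
    rw [← map_sub] at h12
    rw [Ideal.Quotient.eq]
    exact key N hrad h12


end Stmt15
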